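/- For n ≥ 3 and 0 ≤ i ≤ 2n−1, the refined q-Eulerian polynomials of type D satisfy the recurrence T_{n,i}(x;q) = q^{χ(i≥n)} ( x·Σ_{j=0}^{⌈(n−1)i/n⌉−1} T_{n−1,j}(x;q) + Σ_{j=⌈(n−1)i/n⌉}^{2n−3} T_{n−1,j}(x;q) ). In particular T_{n,0}(x;q) = T_{n−1}(x;q). -/

import Mathlib

open Polynomial

/-- `f` has only real zeros (every complex zero is real). -/
def RealRooted (f : Polynomial ℝ) : Prop :=
  ∀ z : ℂ, z ∈ (f.map (algebraMap ℝ ℂ)).roots → z.im = 0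

/-- all zeros of `f` are real (counted with multiplicity). -/
def AllRealRoots (f : Polynomial ℝ) : Prop :=
  f.roots.card = f.natDegree

/-- two polynomials are compatible if every nonnegative linear combination
has only real zeros. -/
def Compatible (f g : Polynomial ℝ) : Prop :=
  ∀ c d : ℝ, 0 ≤ c → 0 ≤ d → RealRooted (C c * f + C d * g)

/-- `Interlaces g f` means `g ⪯ f`: both are real-rooted with positive leading
coefficients, and listing the zeros in decreasing order `u` (of `f`) and `v`
(of `g`), either `deg f = deg g` and `vₙ ≤ uₙ ≤ ⋯ ≤ v₁ ≤ u₁`, or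
`deg f = deg g + 1` and `uₙ ≤ vₙ₋₁ ≤ ⋯ ≤ v₁ ≤ u₁`. -/
def Interlaces (g f : Polynomial ℝ) : Prop :=
  0 < f.leadingCoeff ∧ 0 < g.leadingCoeff ∧
  ∃ u v : List ℝ,
    u.Pairwise (· ≥ ·) ∧ v.Pairwise (· ≥ ·) ∧
    f.roots = (u : Multiset ℝ) ∧ g.roots = (v : Multiset ℝ) ∧
    u.length = f.natDegree ∧ v.length = g.natDegree ∧
    (u.length = v.length ∨ u.length = v.length + 1) ∧
    (∀ (i : ℕ) (hv : i < v.length) (hu : i < u.length),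
      v.get ⟨i, hv⟩ ≤ u.get ⟨i, hu⟩) ∧
    (∀ (i : ℕ) (hu : i + 1 < u.length) (hv : i < v.length),
      u.get ⟨i + 1, hu⟩ ≤ v.get ⟨i, hv⟩)

/-- the finite set of type `D` inversion sequences: `e : Fin n → ℕ` with
`e i < 2(i+1)`. -/
def invSeqs (n : ℕ) : Finset (Fin n → ℕ) :=
  ((Finset.univ : Finset (Fin n → Fin (2 * n + 1))).image
      (fun e => fun i => (e i : ℕ))).filter
    (fun e => ∀ i : Fin n, e i < 2 * ((i : ℕ) + 1))

/-- value of an inversion sequence at (0-indexed) position `i`. -/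
def ev {n : ℕ} (e : Fin n → ℕ) (i : ℕ) : ℕ :=
  if h : i < n then e ⟨i, h⟩ else 0

/-- the type `D` ascent statistic:
`asc_D e = χ(e₁ + e₂/2 ≥ 3/2) + #{i ∈ [n-1] : eᵢ/i < eᵢ₊₁/(i+1)}`
(1-indexed). -/
noncomputable def ascD {n : ℕ} (e : Fin n → ℕ) : ℕ :=
  (if 3 ≤ 2 * ev e 0 + ev e 1 then 1 else 0) +
    ((Finset.Ico 1 n).filter
      (fun i => (i + 1) * ev e (i - 1) < i * ev e i)).card

/-- `exc e = #{i : eᵢ ≥ i}` (1-indexed). -/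
noncomputable def excD {n : ℕ} (e : Fin n → ℕ) : ℕ :=
  ((Finset.range n).filter (fun j => j + 1 ≤ ev e j)).card

/-- the affine type `D` ascent statistic:
`ãsc_D e = asc_D e + χ(e_{n-1}/(n-1) + e_n/n < (2n-1)/n)`. -/
noncomputable def affAscD {n : ℕ} (e : Fin n → ℕ) : ℕ :=
  ascD e +
    (if n * ev e (n - 2) + (n - 1) * ev e (n - 1) < (n - 1) * (2 * n - 1)
      then 1 else 0)

/-- the refined Eulerian polynomial `T_{n,i}(x)` of type `D`. -/
noncomputable def TD (n i : ℕ) : Polynomial ℝ :=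
  ∑ e ∈ (invSeqs n).filter (fun e => ev e (n - 1) = i), X ^ ascD e

/-- the refined `q`-Eulerian polynomial `T_{n,i}(x;q)` of type `D`. -/
noncomputable def TqD (n i : ℕ) (q : ℝ) : Polynomial ℝ :=
  ∑ e ∈ (invSeqs n).filter (fun e => ev e (n - 1) = i),
    C q ^ excD e * X ^ ascD e

/-- the refined affine Eulerian polynomial `T̃_{n,i}(x)` of type `D`. -/
noncomputable def TtD (n i : ℕ) : Polynomial ℝ :=
  ∑ e ∈ (invSeqs n).filter (fun e => ev e (n - 1) = i), X ^ affAscD e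

lemma mem_invSeqs {n : ℕ} (e : Fin n → ℕ) :
    e ∈ invSeqs n ↔ ∀ i : Fin n, e i < 2 * ((i : ℕ) + 1) := by
  unfold invSeqs
  simp only [Finset.mem_filter, Finset.mem_image, Finset.mem_univ, true_and]
  constructor
  · rintro ⟨_, h⟩; exact h
  · intro h
    refine ⟨⟨fun i => ⟨e i, ?_⟩, rfl⟩, h⟩
    have h1 := h i
    have h2 : (i : ℕ) + 1 ≤ n := i.2
    omega

lemma ev_lt {n : ℕ} {e : Fin n → ℕ} (he : e ∈ invSeqs n) {j : ℕ} (hj : j < n) :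
    ev e j < 2 * (j + 1) := by
  rw [mem_invSeqs] at he
  simpa [ev, hj] using he ⟨j, hj⟩

/-- restriction of an inversion sequence -/
def resEv {n : ℕ} (e : Fin n → ℕ) : Fin (n - 1) → ℕ := fun k => ev e k

/-- extension of an inversion sequence by value `i` -/
def extEv (n i : ℕ) (e : Fin (n - 1) → ℕ) : Fin n → ℕ :=
  fun k => if (k : ℕ) = n - 1 then i else ev e k

lemma ev_resEv {n : ℕ} (e : Fin n → ℕ) (hn : 1 ≤ n) {j : ℕ} (hj : j < n - 1) :
    ev (resEv e) j = ev e j := by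
  have hj' : j < n := by omega
  simp [resEv, ev, hj, hj']

lemma resEv_mem {n : ℕ} {e : Fin n → ℕ} (he : e ∈ invSeqs n) :
    resEv e ∈ invSeqs (n - 1) := by
  rw [mem_invSeqs]
  intro k
  have hk : (k : ℕ) < n - 1 := k.2
  have hk' : (k : ℕ) < n := by omega
  have := ev_lt he hk'
  simpa [resEv, ev, hk'] using this

lemma extEv_mem {n i : ℕ} (hn : 1 ≤ n) (hi : i ≤ 2 * n - 1) {e : Fin (n - 1) → ℕ}
    (he : e ∈ invSeqs (n - 1)) : extEv n i e ∈ invSeqs n := by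
  rw [mem_invSeqs]
  intro k
  by_cases hk : (k : ℕ) = n - 1
  · simp only [extEv, hk, if_pos]
    omega
  · have hk2 : (k : ℕ) < n - 1 := by have := k.2; omega
    have := ev_lt he hk2
    simpa [extEv, hk] using this

lemma ev_extEv_last {n i : ℕ} (hn : 1 ≤ n) (e : Fin (n - 1) → ℕ) :
    ev (extEv n i e) (n - 1) = i := by
  have h : n - 1 < n := by omega
  simp [ev, h, extEv]

lemma ev_extEv {n i : ℕ} (e : Fin (n - 1) → ℕ) {j : ℕ} (hj : j < n - 1) :
    ev (extEv n i e) j = ev e j := by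
  have hj' : j < n := by omega
  simp [ev, hj', extEv, Nat.ne_of_lt hj, hj]

lemma extEv_resEv {n i : ℕ} (hn : 1 ≤ n) {e : Fin n → ℕ}
    (hlast : ev e (n - 1) = i) : extEv n i (resEv e) = e := by
  funext k
  by_cases hk : (k : ℕ) = n - 1
  · have : e k = ev e (n - 1) := by simp [ev, ← hk, Nat.lt_of_lt_of_le k.2 le_rfl]
    simp [extEv, hk, this, hlast]
  · have hk2 : (k : ℕ) < n - 1 := by have := k.2; omega
    have hk' : (k : ℕ) < n := k.2
    simp [extEv, hk, resEv, ev, hk2, hk']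

lemma resEv_extEv {n i : ℕ} (e : Fin (n - 1) → ℕ) : resEv (extEv n i e) = e := by
  funext k
  have hk : (k : ℕ) < n - 1 := k.2
  have hk' : (k : ℕ) < n := by omega
  simp [resEv, ev, hk', extEv, Nat.ne_of_lt hk, hk]

lemma excD_eq {n i : ℕ} (hn : 1 ≤ n) {e : Fin n → ℕ}
    (hlast : ev e (n - 1) = i) :
    excD e = excD (resEv e) + (if n ≤ i then 1 else 0) := by
  obtain ⟨m, rfl⟩ : ∃ m, n = m + 1 := ⟨n - 1, by omega⟩
  unfold excD
  rw [Finset.card_filter, Finset.card_filter]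
  simp only [Nat.add_sub_cancel] at *
  rw [Finset.sum_range_succ]
  congr 1
  · apply Finset.sum_congr rfl
    intro j hj
    rw [Finset.mem_range] at hj
    rw [ev_resEv e hn (by simpa using hj)]
  · rw [hlast]

lemma ascD_eq {n i : ℕ} (hn : 3 ≤ n) {e : Fin n → ℕ}
    (hlast : ev e (n - 1) = i) :
    ascD e = ascD (resEv e) +
      (if n * ev (resEv e) (n - 2) < (n - 1) * i then 1 else 0) := by
  have h1 : (1:ℕ) ≤ n := by omega
  obtain ⟨m, rfl⟩ : ∃ m, n = m + 1 := ⟨n - 1, by omega⟩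
  unfold ascD
  rw [Finset.card_filter, Finset.card_filter]
  simp only [Nat.add_sub_cancel] at *
  rw [Finset.sum_Ico_succ_top (by omega : 1 ≤ m)]
  have h0 : ev (resEv e) 0 = ev e 0 := ev_resEv e h1 (by omega)
  have hone : ev (resEv e) 1 = ev e 1 := ev_resEv e h1 (by omega)
  have hsum : ∀ j ∈ Finset.Ico 1 m,
      (if (j + 1) * ev e (j - 1) < j * ev e j then (1:ℕ) else 0)
        = (if (j + 1) * ev (resEv e) (j - 1) < j * ev (resEv e) j then 1 else 0) := by
    intro j hj
    rw [Finset.mem_Ico] at hj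
    rw [ev_resEv e h1 (by omega), ev_resEv e h1 (by omega)]
  have h2 : ev (resEv e) (m + 1 - 2) = ev e (m - 1) := by
    have hm : m + 1 - 2 = m - 1 := by omega
    rw [hm]; exact ev_resEv e h1 (by omega)
  rw [Finset.sum_congr rfl hsum, h0, hone, hlast, h2]
  ring

lemma step1 (n i : ℕ) (hn : 3 ≤ n) (hi : i ≤ 2 * n - 1) (q : ℝ) :
    TqD n i q = C q ^ (if n ≤ i then 1 else 0) *
      ∑ e ∈ invSeqs (n - 1),
        (if n * ev e (n - 2) < (n - 1) * i then (X : Polynomial ℝ) else 1) *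
          (C q ^ excD e * X ^ ascD e) := by
  have h1 : (1:ℕ) ≤ n := by omega
  unfold TqD
  rw [Finset.mul_sum]
  refine Finset.sum_nbij' (fun e => resEv e) (fun e => extEv n i e) ?_ ?_ ?_ ?_ ?_
  · intro e he
    rw [Finset.mem_filter] at he
    exact resEv_mem he.1
  · intro e he
    rw [Finset.mem_filter]
    exact ⟨extEv_mem h1 hi he, ev_extEv_last h1 e⟩
  · intro e he
    rw [Finset.mem_filter] at he
    exact extEv_resEv h1 he.2
  · intro e _
    exact resEv_extEv e
  · intro e he
    rw [Finset.mem_filter] at he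
    rw [excD_eq h1 he.2, ascD_eq hn he.2, pow_add, pow_add]
    split_ifs <;> ring

lemma step2 (n i : ℕ) (hn : 3 ≤ n) (q : ℝ) :
    ∑ e ∈ invSeqs (n - 1),
        (if n * ev e (n - 2) < (n - 1) * i then (X : Polynomial ℝ) else 1) *
          (C q ^ excD e * X ^ ascD e)
      = ∑ j ∈ Finset.range (2 * (n - 1)),
          (if n * j < (n - 1) * i then (X : Polynomial ℝ) else 1) *
            TqD (n - 1) j q := by
  have hmaps : ∀ e ∈ invSeqs (n - 1), ev e (n - 2) ∈ Finset.range (2 * (n - 1)) := by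
    intro e he
    rw [Finset.mem_range]
    have h2 : n - 2 < n - 1 := by omega
    have := ev_lt he h2
    omega
  rw [← Finset.sum_fiberwise_of_maps_to hmaps]
  apply Finset.sum_congr rfl
  intro j _
  unfold TqD
  have hsub : n - 1 - 1 = n - 2 := by omega
  rw [hsub, Finset.mul_sum]
  apply Finset.sum_congr rfl
  intro e he
  rw [Finset.mem_filter] at he
  rw [he.2]

lemma ceil_iff (n i j : ℕ) (hn : 1 ≤ n) :
    n * j < (n - 1) * i ↔ j < ((n - 1) * i + n - 1) / n := by
  have hpos : 0 < n := hn
  conv_rhs => rw [Nat.lt_iff_add_one_le, Nat.le_div_iff_mul_le hpos]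
  rw [add_mul, one_mul]
  generalize (n - 1) * i = m
  generalize hjn : j * n = k
  have : n * j = k := by rw [← hjn]; ring
  rw [this]
  omega

lemma step3 (n i : ℕ) (hn : 3 ≤ n) (hi : i ≤ 2 * n - 1) (q : ℝ) :
    ∑ j ∈ Finset.range (2 * (n - 1)),
        (if n * j < (n - 1) * i then (X : Polynomial ℝ) else 1) * TqD (n - 1) j q
      = X * ∑ j ∈ Finset.range (((n - 1) * i + n - 1) / n), TqD (n - 1) j q +
        ∑ j ∈ Finset.Icc (((n - 1) * i + n - 1) / n) (2 * n - 3), TqD (n - 1) j q := by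
  have hpos : 0 < n := by omega
  set c := ((n - 1) * i + n - 1) / n with hc
  have hcle : c ≤ 2 * (n - 1) := by
    rw [hc, Nat.div_le_iff_le_mul_add_pred hpos]
    have h5 : (n - 1) * i ≤ (n - 1) * (2 * n - 1) := Nat.mul_le_mul_left _ hi
    obtain ⟨m, rfl⟩ : ∃ m, n = m + 3 := ⟨n - 3, by omega⟩
    have e1 : m + 3 - 1 = m + 2 := rfl
    have e2 : 2 * (m + 3) - 1 = 2 * m + 5 := by omega
    rw [e1, e2] at h5
    rw [e1]
    have e3 : (m + 2) * i + (m + 3) - 1 = (m + 2) * i + (m + 2) := by omega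
    rw [e3]
    nlinarith [h5]
  rw [Finset.range_eq_Ico, ← Finset.sum_Ico_consecutive _ (Nat.zero_le c) hcle]
  congr 1
  · rw [← Finset.range_eq_Ico, Finset.mul_sum]
    apply Finset.sum_congr rfl
    intro j hj
    rw [Finset.mem_range] at hj
    rw [if_pos ((ceil_iff n i j (by omega)).mpr hj)]
  · have h2 : 2 * (n - 1) = (2 * n - 3) + 1 := by omega
    rw [h2, Finset.Ico_add_one_right_eq_Icc]
    apply Finset.sum_congr rfl
    intro j hj
    rw [Finset.mem_Icc] at hj
    rw [if_neg (by rw [ceil_iff n i j (by omega)]; omega), one_mul]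

theorem Tq_recurrence' (n i : ℕ) (hn : 3 ≤ n) (hi : i ≤ 2 * n - 1) (q : ℝ) :
    TqD n i q = C q ^ (if n ≤ i then 1 else 0) *
      (X * ∑ j ∈ Finset.range (((n - 1) * i + n - 1) / n), TqD (n - 1) j q +
        ∑ j ∈ Finset.Icc (((n - 1) * i + n - 1) / n) (2 * n - 3),
          TqD (n - 1) j q) ∧
    TqD n 0 q = ∑ j ∈ Finset.range (2 * (n - 1)), TqD (n - 1) j q := by
  constructor
  · rw [step1 n i hn hi q, step2 n i hn q, step3 n i hn hi q]
  · rw [step1 n 0 hn (by omega) q, step2 n 0 hn q]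
    have h0 : ∀ j : ℕ, ¬ (n * j < (n - 1) * 0) := by intro j; omega
    simp only [if_neg (by omega : ¬ n ≤ 0), pow_zero, one_mul]
    apply Finset.sum_congr rfl
    intro j hj
    rw [if_neg (h0 j), one_mul]

/-- Recurrence for the refined `q`-Eulerian polynomials of type `D`; in
particular `T_{n,0}(x;q) = T_{n-1}(x;q)`. -/
theorem Tq_recurrence (n i : ℕ) (hn : 3 ≤ n) (hi : i ≤ 2 * n - 1) (q : ℝ) :
    TqD n i q = C q ^ (if n ≤ i then 1 else 0) *
      (X * ∑ j ∈ Finset.range (((n - 1) * i + n - 1) / n), TqD (n - 1) j q +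
        ∑ j ∈ Finset.Icc (((n - 1) * i + n - 1) / n) (2 * n - 3),
          TqD (n - 1) j q) ∧
    TqD n 0 q = ∑ j ∈ Finset.range (2 * (n - 1)), TqD (n - 1) j q := by
  exact Tq_recurrence' n i hn hi q
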